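/- Let P₁ and P₂ be shortest paths in an undirected positively-weighted graph that traverse a common edge (a,b) in the same direction. Then P₁ and P₂ agree: the first vertex of P₁ in P₁ ∩ P₂ equals the first vertex of P₂ in P₁ ∩ P₂, and |P₁ ∩ P₂| ≥ 2. -/

import Mathlib

/-- A graph with real edge weights that are strictly positive on edges. -/
structure WeightedGraph (V : Type*) where
  Adj : V → V → Prop
  w : V → V → ℝ
  pos : ∀ {u v : V}, Adj u v → 0 < w u v

namespace WeightedGraph

variable {V : Type*} (G : WeightedGraph V)

/-- The graph is undirected: adjacency and weights are symmetric. -/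
def IsUndirected : Prop :=
  (∀ u v, G.Adj u v → G.Adj v u) ∧ (∀ u v, G.w u v = G.w v u)

/-- Total weight of a vertex sequence (sum of weights of consecutive pairs). -/
def weight (l : List V) : ℝ :=
  ((l.zip l.tail).map fun p => G.w p.1 p.2).sum

/-- A (simple) path: a nonempty sequence of distinct vertices with consecutive
vertices adjacent. -/
def IsPath (l : List V) : Prop :=
  l ≠ [] ∧ l.Chain' G.Adj ∧ l.Nodup

/-- A path beginning at `u` and ending at `v`. -/
def IsPathFrom (l : List V) (u v : V) : Prop :=
  G.IsPath l ∧ l.head? = some u ∧ l.getLast? = some v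

/-- A shortest path between its endpoints: a path whose total weight is at most
that of any path with the same endpoints. -/
def IsShortest (l : List V) : Prop :=
  G.IsPath l ∧ ∀ l', G.IsPath l' → l'.head? = l.head? → l'.getLast? = l.getLast? →
    G.weight l ≤ G.weight l'

/-- Weighted graph distance from `u` to `v`. -/
noncomputable def dist (u v : V) : ℝ :=
  sInf {c : ℝ | ∃ l, G.IsPathFrom l u v ∧ G.weight l = c}

end WeightedGraph

/-- `v` is the first vertex of `P` lying in the set `S`. -/
def FirstIn {V : Type*} (P : List V) (S : Set V) (v : V) : Prop :=
  v ∈ S ∧ ∃ pre post : List V, P = pre ++ v :: post ∧ ∀ x ∈ pre, x ∉ S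

/-- `v` is the last vertex of `P` lying in the set `S`. -/
def LastIn {V : Type*} (P : List V) (S : Set V) (v : V) : Prop :=
  v ∈ S ∧ ∃ pre post : List V, P = pre ++ v :: post ∧ ∀ x ∈ post, x ∉ S

namespace WeightedGraph
variable {V : Type*} (G : WeightedGraph V)
@[simp] lemma weight_nil : G.weight ([] : List V) = 0 := by simp [weight]
@[simp] lemma weight_singleton (u : V) : G.weight [u] = 0 := by simp [weight]
@[simp] lemma weight_cons_cons (u v : V) (l : List V) :
    G.weight (u :: v :: l) = G.w u v + G.weight (v :: l) := by
  simp [weight]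

lemma weight_append (A : List V) (y : V) (B : List V) :
    G.weight (A ++ y :: B) = G.weight (A ++ [y]) + G.weight (y :: B) := by
  induction A with
  | nil => simp
  | cons a A ih =>
    cases A with
    | nil => simp
    | cons c A' => simp only [List.cons_append, weight_cons_cons] at *; rw [ih]; ring
end WeightedGraph
namespace WeightedGraph
variable {V : Type*} (G : WeightedGraph V)

lemma weight_nonneg {l : List V} (h : l.Chain' G.Adj) : 0 ≤ G.weight l := by
  induction l with
  | nil => simp
  | cons a l ih =>
    cases l with
    | nil => simp
    | cons b l' =>
      simp only [List.Chain', List.isChain_cons_cons] at h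
      have := G.pos h.1
      have := ih h.2
      rw [weight_cons_cons]; linarith

lemma weight_pos {a : V} {l : List V} (h : (a :: l).Chain' G.Adj) (hl : l ≠ []) :
    0 < G.weight (a :: l) := by
  cases l with
  | nil => exact absurd rfl hl
  | cons b l' =>
    simp only [List.Chain', List.isChain_cons_cons] at h
    have := G.pos h.1
    have := G.weight_nonneg h.2
    rw [weight_cons_cons]; linarith

lemma weight_reverse (hG : G.IsUndirected) (l : List V) :
    G.weight l.reverse = G.weight l := by
  induction l with
  | nil => simp
  | cons a l ih =>
    cases l with
    | nil => simp
    | cons b l' =>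
      have h1 : (a :: b :: l').reverse = (b :: l').reverse ++ [a] := by simp
      have h2 : (b :: l').reverse = l'.reverse ++ [b] := by simp
      rw [h1, h2, List.append_assoc]
      have h3 : ([b] ++ [a] : List V) = b :: [a] := rfl
      rw [h3, G.weight_append l'.reverse b [a], ← h2, ih]
      rw [weight_cons_cons, weight_cons_cons, weight_singleton, hG.2 b a]
      ring

lemma chain'_reverse_of (hG : G.IsUndirected) {l : List V} (h : l.Chain' G.Adj) :
    l.reverse.Chain' G.Adj := by
  simp only [List.Chain', List.isChain_reverse]
  exact h.imp fun a b hab => hG.1 _ _ hab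
end WeightedGraph
open Classical in
lemma exists_dup_decomp {V : Type*} {l : List V} (h : ¬ l.Nodup) :
    ∃ (A : List V) (v : V) (B C : List V), l = A ++ v :: B ++ v :: C := by
  induction l with
  | nil => exact absurd List.nodup_nil h
  | cons a l ih =>
    by_cases ha : a ∈ l
    · obtain ⟨B, C, rfl⟩ := List.append_of_mem ha
      exact ⟨[], a, B, C, rfl⟩
    · have hl : ¬ l.Nodup := fun hn => h (List.nodup_cons.mpr ⟨ha, hn⟩)
      obtain ⟨A, v, B, C, rfl⟩ := ih hl
      exact ⟨a :: A, v, B, C, rfl⟩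

lemma head?_append_ne {V : Type*} {l : List V} (h : l ≠ []) (l' : List V) :
    (l ++ l').head? = l.head? := by
  cases l with
  | nil => exact absurd rfl h
  | cons a t => simp

namespace WeightedGraph
variable {V : Type*} (G : WeightedGraph V)
lemma exists_path_of_walk : ∀ (n : ℕ) (l : List V), l.length ≤ n → l ≠ [] → l.Chain' G.Adj →
    ∃ p, G.IsPath p ∧ p.head? = l.head? ∧ p.getLast? = l.getLast? ∧ G.weight p ≤ G.weight l := by
  intro n
  induction n with
  | zero => intro l hl hne _; cases l <;> simp_all
  | succ n ih =>
    intro l hl hne hc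
    by_cases hnd : l.Nodup
    · exact ⟨l, ⟨hne, hc, hnd⟩, rfl, rfl, le_refl _⟩
    · obtain ⟨A, v, B, C, rfl⟩ := exists_dup_decomp hnd
      -- here (A ++ v :: B ++ v :: C) = (A ++ (v::B)) ++ (v::C)
      have h1 := List.isChain_append.mp hc
      have h2 := List.isChain_append.mp h1.1
      have hc' : (A ++ v :: C).Chain' G.Adj := by
        simp only [List.Chain', List.isChain_append]
        exact ⟨h2.1, h1.2.1, fun x hx y hy => h2.2.2 x hx y (by simpa using hy)⟩
      have hlen : (A ++ v :: C).length ≤ n := by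
        simp only [List.length_append, List.length_cons] at hl ⊢
        omega
      have hne' : A ++ v :: C ≠ [] := by simp
      obtain ⟨p, hp, hh, hg, hw⟩ := ih (A ++ v :: C) hlen hne' hc'
      refine ⟨p, hp, ?_, ?_, ?_⟩
      · rw [hh]; cases A <;> simp
      · rw [hg, List.getLast?_append_cons, List.getLast?_append_cons]
      · refine le_trans hw ?_
        rw [G.weight_append A v C]
        have e1 : A ++ v :: B ++ v :: C = (A ++ v :: B) ++ v :: C := rfl
        rw [e1, G.weight_append (A ++ v :: B) v C]
        have e2 : (A ++ v :: B) ++ [v] = A ++ v :: (B ++ [v]) := by simp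
        rw [e2, G.weight_append A v (B ++ [v])]
        have hbv : (v :: (B ++ [v])).Chain' G.Adj := by
          have : ((v :: B) ++ [v]).Chain' G.Adj := by
            simp only [List.Chain', List.isChain_append]
            refine ⟨h2.2.1, List.isChain_singleton v, ?_⟩
            intro x hx y hy
            simp at hy; subst hy
            exact h1.2.2 x (by simpa using hx) v (by simp)
          simpa using this
        have := G.weight_nonneg hbv
        linarith
end WeightedGraph
lemma getLast?_append_ne {V : Type*} (l : List V) {l' : List V} (h : l' ≠ []) :
    (l ++ l').getLast? = l'.getLast? := by
  cases l' with
  | nil => exact absurd rfl h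
  | cons a t => exact List.getLast?_append_cons l a t

namespace WeightedGraph
variable {V : Type*} (G : WeightedGraph V)

lemma weight_decomp (A : List V) {m : List V} (D : List V) {u v : V}
    (hu : m.head? = some u) (hv : m.getLast? = some v) :
    G.weight (A ++ m ++ D) = G.weight (A ++ [u]) + G.weight m + G.weight (v :: D) := by
  cases m with
  | nil => simp at hu
  | cons u' M =>
    have huu : u = u' := by simpa using hu.symm
    subst huu
    obtain ⟨N, hN⟩ : ∃ N, u :: M = N ++ [v] := by
      have := List.getLast?_eq_some_iff.mp hv
      exact this
    have e1 : A ++ (u :: M) ++ D = A ++ u :: (M ++ D) := by simp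
    rw [e1, G.weight_append A u (M ++ D)]
    have e2 : u :: (M ++ D) = (u :: M) ++ D := rfl
    rw [e2, hN]
    cases D with
    | nil => rw [List.append_nil, ← hN]; simp
    | cons d D' =>
      have e3 : (N ++ [v]) ++ d :: D' = N ++ v :: (d :: D') := by simp
      rw [e3, G.weight_append N v (d :: D')]
      have e4 : N ++ [v] = N ++ v :: ([] : List V) := rfl
      rw [e4, G.weight_append N v ([] : List V)]
      simp; ring

/-- A segment of a shortest path weighs no more than any walk with the same endpoints. -/
lemma seg_le {A M D : List V} (hP : G.IsShortest (A ++ M ++ D)) (hM : M ≠ [])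
    {l' : List V} (hl' : l' ≠ []) (hc : l'.Chain' G.Adj)
    (hh : l'.head? = M.head?) (hg : l'.getLast? = M.getLast?) :
    G.weight M ≤ G.weight l' := by
  by_contra hlt
  push_neg at hlt
  obtain ⟨u, hu⟩ : ∃ u, M.head? = some u := by
    cases M with | nil => exact absurd rfl hM | cons a t => exact ⟨a, rfl⟩
  obtain ⟨v, hv⟩ : ∃ v, M.getLast? = some v := by
    cases hMe : M.getLast? with
    | none => exact absurd (List.getLast?_eq_none_iff.mp hMe) hM
    | some v => exact ⟨v, rfl⟩
  -- build candidate walk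
  have hPc : (A ++ M ++ D).Chain' G.Adj := hP.1.2.1
  have hW : (A ++ l' ++ D).Chain' G.Adj := by
    have h1 := List.isChain_append.mp hPc
    have h2 := List.isChain_append.mp h1.1
    simp only [List.Chain', List.isChain_append]
    refine ⟨⟨h2.1, hc, ?_⟩, h1.2.1, ?_⟩
    · intro x hx y hy
      exact h2.2.2 x hx y (by rw [hh] at hy; exact hy)
    · intro x hx y hy
      refine h1.2.2 x ?_ y hy
      rw [getLast?_append_ne A hl', hg, ← getLast?_append_ne A hM] at hx
      exact hx
  have hWne : A ++ l' ++ D ≠ [] := by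
    intro h; rcases List.append_eq_nil_iff.mp h with ⟨h', -⟩
    exact hl' (List.append_eq_nil_iff.mp h').2
  obtain ⟨p, hp, hph, hpg, hpw⟩ :=
    G.exists_path_of_walk (A ++ l' ++ D).length (A ++ l' ++ D) le_rfl hWne hW
  have hwW : G.weight (A ++ l' ++ D) < G.weight (A ++ M ++ D) := by
    rw [G.weight_decomp A D hu hv, G.weight_decomp A D (hh.symm ▸ hu) (hg.symm ▸ hv)]
    linarith
  have hhead : (A ++ l' ++ D).head? = (A ++ M ++ D).head? := by
    cases A with
    | nil => simpa [head?_append_ne hl', head?_append_ne hM] using (hh.trans rfl)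
    | cons a t => simp
  have hlast : (A ++ l' ++ D).getLast? = (A ++ M ++ D).getLast? := by
    cases D with
    | nil =>
      simp only [List.append_nil]
      rw [getLast?_append_ne A hl', getLast?_append_ne A hM, hg]
    | cons d D' =>
      rw [List.append_assoc, List.append_assoc,
          getLast?_append_ne A (by simp : l' ++ d :: D' ≠ []),
          getLast?_append_ne A (by simp : M ++ d :: D' ≠ []),
          getLast?_append_ne l' (by simp : (d :: D') ≠ []),
          getLast?_append_ne M (by simp : (d :: D') ≠ [])]
  have := hP.2 p hp (hph.trans hhead) (hpg.trans hlast)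
  linarith
end WeightedGraph
section ListOrder
variable {V : Type*}

/-- `u` occurs strictly before `v` in `l`. -/
def Before (l : List V) (u v : V) : Prop :=
  ∃ A B C : List V, l = A ++ u :: B ++ v :: C

lemma split_unique : ∀ {A : List V} {y : V} {B C D : List V},
    A ++ y :: B = C ++ y :: D → y ∉ A → y ∉ C → A = C ∧ B = D := by
  intro A
  induction A with
  | nil =>
    intro y B C D h hA hC
    cases C with
    | nil => simpa using h
    | cons c C' =>
      simp only [List.nil_append, List.cons_append, List.cons.injEq] at h
      exact absurd (h.1 ▸ (List.mem_cons_self (a := c) (l := C'))) (by simpa [h.1] using hC)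
  | cons a A' ih =>
    intro y B C D h hA hC
    cases C with
    | nil =>
      simp only [List.cons_append, List.nil_append, List.cons.injEq] at h
      exact absurd (by simp [h.1]) hA
    | cons c C' =>
      simp only [List.cons_append, List.cons.injEq] at h
      obtain ⟨rfl, h2⟩ := h
      have := ih h2 (fun hy => hA (List.mem_cons_of_mem _ hy)) (fun hy => hC (List.mem_cons_of_mem _ hy))
      exact ⟨by rw [this.1], this.2⟩

lemma notmem_prefix_of_nodup {l A : List V} {y : V} {B : List V}
    (hnd : l.Nodup) (h : l = A ++ y :: B) : y ∉ A := by
  subst h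
  rw [List.nodup_append] at hnd
  exact fun hy => hnd.2.2 y hy y (List.mem_cons_self (a := y) (l := B)) rfl

lemma before_asymm {l : List V} (hnd : l.Nodup) {u v : V}
    (h1 : Before l u v) (h2 : Before l v u) : False := by
  obtain ⟨A, B, C, hABC⟩ := h1
  obtain ⟨A', B', C', hABC'⟩ := h2
  have e1 : l = A ++ u :: (B ++ v :: C) := by simpa using hABC
  have e2 : l = (A' ++ v :: B') ++ u :: C' := by simpa using hABC'
  have hu1 : u ∉ A := notmem_prefix_of_nodup hnd e1
  have hu2 : u ∉ A' ++ v :: B' := notmem_prefix_of_nodup hnd e2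
  obtain ⟨hAeq, hBeq⟩ := split_unique (e1.symm.trans e2) hu1 hu2
  -- v ∈ A and v in the suffix: contradiction with nodup
  rw [e1, List.nodup_append] at hnd
  have hvA : v ∈ A := by rw [hAeq]; simp
  have hvsuf : v ∈ u :: (B ++ v :: C) := by simp
  exact hnd.2.2 v hvA v hvsuf rfl

lemma before_of_mem_split {l : List V} {u v : V} (A B : List V)
    (h : l = A ++ u :: B) (hv : v ∈ B) : Before l u v := by
  obtain ⟨B₁, B₂, rfl⟩ := List.append_of_mem hv
  exact ⟨A, B₁, B₂, by simpa using h⟩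

lemma before_total {l : List V} {u v : V} (hu : u ∈ l) (hv : v ∈ l) (hne : u ≠ v) :
    Before l u v ∨ Before l v u := by
  obtain ⟨s, t, rfl⟩ := List.append_of_mem hu
  rcases List.mem_append.mp hv with hvs | hvt
  · obtain ⟨s₁, s₂, rfl⟩ := List.append_of_mem hvs
    exact Or.inr ⟨s₁, s₂, t, by simp⟩
  · rcases List.mem_cons.mp hvt with rfl | hvt'
    · exact absurd rfl hne
    · exact Or.inl (before_of_mem_split s t rfl hvt')

lemma before3 {l : List V} (hnd : l.Nodup) {x y z : V}
    (h1 : Before l x y) (h2 : Before l y z) :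
    ∃ A B C D : List V, l = A ++ x :: B ++ y :: C ++ z :: D := by
  obtain ⟨A, B, C, hABC⟩ := h1
  obtain ⟨A', B', C', hABC'⟩ := h2
  have e1 : l = (A ++ x :: B) ++ y :: C := by simpa using hABC
  have e2 : l = A' ++ y :: (B' ++ z :: C') := by simpa using hABC'
  have hy1 : y ∉ A ++ x :: B := notmem_prefix_of_nodup hnd e1
  have hy2 : y ∉ A' := notmem_prefix_of_nodup hnd e2
  obtain ⟨hAeq, hCeq⟩ := split_unique (e1.symm.trans e2) hy1 hy2
  exact ⟨A, B, B', C', by rw [e1, hCeq]; simp⟩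

lemma before_trans {l : List V} (hnd : l.Nodup) {x y z : V}
    (h1 : Before l x y) (h2 : Before l y z) : Before l x z := by
  obtain ⟨A, B, C, D, h⟩ := before3 hnd h1 h2
  exact ⟨A, B ++ y :: C, D, by simpa using h⟩

lemma firstIn_exists {P : List V} {S : Set V} (h : ∃ x, x ∈ P ∧ x ∈ S) :
    ∃ v, FirstIn P S v := by
  classical
  induction P with
  | nil => obtain ⟨x, hx, -⟩ := h; simp at hx
  | cons a P ih =>
    by_cases ha : a ∈ S
    · exact ⟨a, ha, [], P, rfl, by simp⟩
    · obtain ⟨x, hx, hxS⟩ := h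
      rcases List.mem_cons.mp hx with rfl | hx'
      · exact absurd hxS ha
      · obtain ⟨v, hvS, pre, post, hsplit, hpre⟩ := ih ⟨x, hx', hxS⟩
        refine ⟨v, hvS, a :: pre, post, by rw [hsplit]; rfl, ?_⟩
        intro x' hx'
        rcases List.mem_cons.mp hx' with rfl | h'
        · exact ha
        · exact hpre x' h'

lemma firstIn_before {P : List V} {S : Set V} {v s : V} (hv : FirstIn P S v)
    (hs : s ∈ S) (hsP : s ∈ P) (hne : s ≠ v) : Before P v s := by
  obtain ⟨-, pre, post, rfl, hpre⟩ := hv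
  have : s ∈ post := by
    rcases List.mem_append.mp hsP with h | h
    · exact absurd hs (hpre s h)
    · rcases List.mem_cons.mp h with rfl | h'
      · exact absurd rfl hne
      · exact h'
  exact before_of_mem_split pre post rfl this

end ListOrder
lemma chain'_middle {V : Type*} {R : V → V → Prop} {A M D : List V}
    (h : (A ++ M ++ D).Chain' R) : M.Chain' R :=
  (List.isChain_append.mp (List.isChain_append.mp h).1).2.1

@[simp] lemma getLast?_cons_concat {V : Type*} (x : V) (L : List V) (y : V) :
    (x :: (L ++ [y])).getLast? = some y := by
  have : x :: (L ++ [y]) = (x :: L) ++ [y] := rfl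
  rw [this, List.getLast?_concat]

@[simp] lemma getLast?_cons_concat' {V : Type*} (a x : V) (l m : List V) :
    (a :: (l ++ (m ++ [x]))).getLast? = some x := by
  rw [show a :: (l ++ (m ++ [x])) = (a :: (l ++ m)) ++ [x] by simp, List.getLast?_concat]

@[simp] lemma getLast?_cons_concat'' {V : Type*} (a b x : V) (l m : List V) :
    (a :: (l ++ b :: (m ++ [x]))).getLast? = some x := by
  rw [show a :: (l ++ b :: (m ++ [x])) = (a :: (l ++ b :: m)) ++ [x] by simp,
    List.getLast?_concat]

namespace WeightedGraph
variable {V : Type*} (G : WeightedGraph V)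

lemma key (hG : G.IsUndirected) {P Q : List V} (hP : G.IsShortest P) (hQ : G.IsShortest Q)
    {x y z : V} {A B C D : List V} (hPd : P = A ++ x :: B ++ y :: C ++ z :: D)
    {E F : List V} (hQd : Q = E ++ y :: F) (hx : x ∈ F) (hz : z ∈ F) : False := by
  have hPc : P.Chain' G.Adj := hP.1.2.1
  have hQc : Q.Chain' G.Adj := hQ.1.2.1
  have hPnd : P.Nodup := hP.1.2.2
  -- x ≠ z
  have hxz : x ≠ z := by
    have e : P = ((A ++ x :: B) ++ y :: C) ++ z :: D := by rw [hPd]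
    have := notmem_prefix_of_nodup hPnd e
    intro h; exact this (by simp [← h])
  -- segment weights on P
  set p := G.weight (x :: (B ++ [y])) with hp_def
  set q := G.weight (y :: (C ++ [z])) with hq_def
  have eP_xz : P = A ++ (x :: (B ++ y :: C ++ [z])) ++ D := by rw [hPd]; simp
  have eP_xy : P = A ++ (x :: (B ++ [y])) ++ (C ++ z :: D) := by rw [hPd]; simp
  have eP_yz : P = (A ++ x :: B) ++ (y :: (C ++ [z])) ++ D := by rw [hPd]; simp
  have wMxz : G.weight (x :: (B ++ y :: C ++ [z])) = p + q := by
    have e : x :: (B ++ y :: C ++ [z]) = (x :: B) ++ y :: (C ++ [z]) := by simp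
    rw [e, G.weight_append (x :: B) y (C ++ [z])]
    rfl
  have hcMxy : (x :: (B ++ [y])).Chain' G.Adj := chain'_middle (eP_xy ▸ hPc)
  have hcMyz : (y :: (C ++ [z])).Chain' G.Adj := chain'_middle (eP_yz ▸ hPc)
  have hq_pos : 0 < q := G.weight_pos hcMyz (by simp)
  have hp_pos : 0 < p := G.weight_pos hcMxy (by simp)
  -- split F at x
  obtain ⟨F₁, F₂, rfl⟩ := List.append_of_mem hx
  rcases List.mem_append.mp hz with hzF₁ | hzF₂
  · -- order on Q : y .. z .. x
    obtain ⟨F₁', F₁'', rfl⟩ := List.append_of_mem hzF₁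
    set s := G.weight (y :: (F₁' ++ [z])) with hs_def
    set t := G.weight (z :: (F₁'' ++ [x])) with ht_def
    have eQ_yx : Q = E ++ (y :: (F₁' ++ z :: F₁'' ++ [x])) ++ F₂ := by rw [hQd]; simp
    have eQ_zx : Q = (E ++ y :: F₁') ++ (z :: (F₁'' ++ [x])) ++ F₂ := by rw [hQd]; simp
    have wNyx : G.weight (y :: (F₁' ++ z :: F₁'' ++ [x])) = s + t := by
      have e : y :: (F₁' ++ z :: F₁'' ++ [x]) = (y :: F₁') ++ z :: (F₁'' ++ [x]) := by simp
      rw [e, G.weight_append (y :: F₁') z (F₁'' ++ [x])]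
      rfl
    have hcNzx : (z :: (F₁'' ++ [x])).Chain' G.Adj := chain'_middle (eQ_zx ▸ hQc)
    -- (i) Q-segment y→x  ≤  reverse of P-segment x→y
    have h1 : s + t ≤ p := by
      rw [← wNyx, hp_def, ← G.weight_reverse hG (x :: (B ++ [y]))]
      exact G.seg_le (eQ_yx ▸ hQ) (by simp) (by simp) (G.chain'_reverse_of hG hcMxy)
        (by rw [List.head?_reverse]; simp) (by rw [List.getLast?_reverse]; simp)
    -- (ii) P-segment x→z ≤ reverse of Q-segment z→x
    have h2 : p + q ≤ t := by
      rw [← wMxz, ht_def, ← G.weight_reverse hG (z :: (F₁'' ++ [x]))]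
      exact G.seg_le (eP_xz ▸ hP) (by simp) (by simp) (G.chain'_reverse_of hG hcNzx)
        (by rw [List.head?_reverse]; simp) (by rw [List.getLast?_reverse]; simp)
    have hs_nonneg : 0 ≤ s := G.weight_nonneg (chain'_middle ((by rw [hQd]; simp :
      Q = E ++ (y :: (F₁' ++ [z])) ++ (F₁'' ++ x :: F₂)) ▸ hQc))
    linarith
  · rcases List.mem_cons.mp hzF₂ with rfl | hzF₂'
    · exact hxz rfl
    · -- order on Q : y .. x .. z
      obtain ⟨F₂', F₂'', rfl⟩ := List.append_of_mem hzF₂'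
      set s := G.weight (y :: (F₁ ++ [x])) with hs_def
      set t := G.weight (x :: (F₂' ++ [z])) with ht_def
      have eQ_yz : Q = E ++ (y :: (F₁ ++ x :: F₂' ++ [z])) ++ F₂'' := by rw [hQd]; simp
      have eQ_yx : Q = E ++ (y :: (F₁ ++ [x])) ++ (F₂' ++ z :: F₂'') := by rw [hQd]; simp
      have wNyz : G.weight (y :: (F₁ ++ x :: F₂' ++ [z])) = s + t := by
        have e : y :: (F₁ ++ x :: F₂' ++ [z]) = (y :: F₁) ++ x :: (F₂' ++ [z]) := by simp
        rw [e, G.weight_append (y :: F₁) x (F₂' ++ [z])]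
        rfl
      have hcNyx : (y :: (F₁ ++ [x])).Chain' G.Adj := chain'_middle (eQ_yx ▸ hQc)
      have hcNxz : (x :: (F₂' ++ [z])).Chain' G.Adj := chain'_middle ((by rw [hQd]; simp :
        Q = (E ++ y :: F₁) ++ (x :: (F₂' ++ [z])) ++ F₂'') ▸ hQc)
      -- (i) Q-segment y→z ≤ P-segment y→z
      have h1 : s + t ≤ q := by
        rw [← wNyz, hq_def]
        exact G.seg_le (eQ_yz ▸ hQ) (by simp) (by simp) hcMyz (by simp) (by simp)
      -- (ii) P-segment x→z ≤ Q-segment x→z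
      have h2 : p + q ≤ t := by
        rw [← wMxz, ht_def]
        exact G.seg_le (eP_xz ▸ hP) (by simp) (by simp) hcNxz (by simp) (by simp)
      have hs_pos : 0 < s := G.weight_pos hcNyx (by simp)
      linarith
end WeightedGraph
namespace WeightedGraph
variable {V : Type*} (G : WeightedGraph V)

/-- If `v` is the first vertex of shortest path `P` in the common set `S`, and both `P` and
`Q` traverse the edge `(a, b)`, then `v` is (weakly) before `a` on `Q`. -/
lemma first_before_edge (hG : G.IsUndirected) {P Q : List V}
    (hP : G.IsShortest P) (hQ : G.IsShortest Q) {a b v : V}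
    {X Y : List V} (hPe : P = X ++ a :: b :: Y) {X' Y' : List V} (hQe : Q = X' ++ a :: b :: Y')
    {S : Set V} (hSP : ∀ x ∈ S, x ∈ P) (hSQ : ∀ x ∈ S, x ∈ Q)
    (haS : a ∈ S) (hbS : b ∈ S) (hv : FirstIn P S v) :
    Before Q v a ∨ v = a := by
  have ndP : P.Nodup := hP.1.2.2
  have ndQ : Q.Nodup := hQ.1.2.2
  have Bab_P : Before P a b := ⟨X, [], Y, by rw [hPe]; simp⟩
  have Bab_Q : Before Q a b := ⟨X', [], Y', by rw [hQe]; simp⟩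
  by_cases hva : v = a
  · exact Or.inr hva
  have hvb : v ≠ b := by
    rintro rfl
    exact before_asymm ndP Bab_P
      (firstIn_before hv haS (hSP a haS) (fun h => hva h.symm))
  have hBva : Before P v a := firstIn_before hv haS (hSP a haS) (fun h => hva h.symm)
  obtain ⟨A, B, C, D, hPd⟩ := before3 ndP hBva Bab_P
  rcases before_total (hSQ v hv.1) (hSQ a haS) hva with h | h
  · exact Or.inl h
  · exfalso
    -- a is strictly before v on Q; but a is immediately followed by b
    obtain ⟨A', B', C', hA'⟩ := h
    have e1 : Q = X' ++ a :: (b :: Y') := by rw [hQe]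
    have e2 : Q = A' ++ a :: (B' ++ v :: C') := by rw [hA']; simp
    have ha1 : a ∉ X' := notmem_prefix_of_nodup ndQ e1
    have ha2 : a ∉ A' := notmem_prefix_of_nodup ndQ e2
    obtain ⟨-, hsuf⟩ := split_unique (e1.symm.trans e2) ha1 ha2
    have hvF : v ∈ b :: Y' := by rw [hsuf]; simp
    exact G.key hG hP hQ hPd e1 hvF (by simp)
end WeightedGraph

/-- Edge-agreeing implies agreeing: if shortest paths `P₁` and `P₂` in an undirected
positively-weighted graph both traverse the edge `(a, b)` in the same direction,
then they agree: the first vertex of `P₁` in `P₁ ∩ P₂` equals the first vertex of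
`P₂` in `P₁ ∩ P₂`, and `|P₁ ∩ P₂| ≥ 2`. -/
theorem edge_agreeing_implies_agreeing {V : Type*} (G : WeightedGraph V)
    (hG : G.IsUndirected) (P₁ P₂ : List V) (a b : V)
    (h₁ : G.IsShortest P₁) (h₂ : G.IsShortest P₂)
    (hab₁ : [a, b] <:+: P₁) (hab₂ : [a, b] <:+: P₂) :
    (∃ v, FirstIn P₁ {x | x ∈ P₁ ∧ x ∈ P₂} v ∧ FirstIn P₂ {x | x ∈ P₁ ∧ x ∈ P₂} v) ∧
    2 ≤ Set.ncard {x | x ∈ P₁ ∧ x ∈ P₂} := by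
  set S : Set V := {x | x ∈ P₁ ∧ x ∈ P₂} with hS_def
  obtain ⟨X₁, Y₁, hX₁⟩ := hab₁
  obtain ⟨X₂, Y₂, hX₂⟩ := hab₂
  have hP₁e : P₁ = X₁ ++ a :: b :: Y₁ := by rw [← hX₁]; simp
  have hP₂e : P₂ = X₂ ++ a :: b :: Y₂ := by rw [← hX₂]; simp
  have nd₁ : P₁.Nodup := h₁.1.2.2
  have nd₂ : P₂.Nodup := h₂.1.2.2
  have haP₁ : a ∈ P₁ := by rw [hP₁e]; simp
  have hbP₁ : b ∈ P₁ := by rw [hP₁e]; simp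
  have haP₂ : a ∈ P₂ := by rw [hP₂e]; simp
  have hbP₂ : b ∈ P₂ := by rw [hP₂e]; simp
  have hab : a ≠ b := by
    have h := nd₁
    rw [hP₁e, List.nodup_append] at h
    have := List.nodup_cons.mp h.2.1
    exact fun hE => this.1 (by rw [hE]; simp)
  have haS : a ∈ S := ⟨haP₁, haP₂⟩
  have hbS : b ∈ S := ⟨hbP₁, hbP₂⟩
  have hSP₁ : ∀ x ∈ S, x ∈ P₁ := fun x hx => hx.1
  have hSP₂ : ∀ x ∈ S, x ∈ P₂ := fun x hx => hx.2
  -- cardinality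
  have hcard : 2 ≤ Set.ncard S := by
    have hfin : S.Finite := (P₁.finite_toSet).subset (fun x hx => hx.1)
    have hsub : ({a, b} : Set V) ⊆ S := by
      intro x hx
      rcases hx with rfl | rfl
      · exact haS
      · exact hbS
    calc 2 = Set.ncard ({a, b} : Set V) := (Set.ncard_pair hab).symm
      _ ≤ Set.ncard S := Set.ncard_le_ncard hsub hfin
  obtain ⟨v₁, hv₁⟩ := firstIn_exists (P := P₁) ⟨a, haP₁, haS⟩
  obtain ⟨v₂, hv₂⟩ := firstIn_exists (P := P₂) ⟨a, haP₂, haS⟩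
  refine ⟨⟨v₁, hv₁, ?_⟩, hcard⟩
  have hmain : v₁ = v₂ := by
    by_contra hne
    have Bab₁ : Before P₁ a b := ⟨X₁, [], Y₁, by rw [hP₁e]; simp⟩
    have Bab₂ : Before P₂ a b := ⟨X₂, [], Y₂, by rw [hP₂e]; simp⟩
    -- v₂ is weakly before a on P₁
    have hC2 : Before P₁ v₂ a ∨ v₂ = a :=
      G.first_before_edge hG h₂ h₁ hP₂e hP₁e hSP₂ hSP₁ haS hbS hv₂
    have hBv₂b : Before P₁ v₂ b := by
      rcases hC2 with h | rfl
      · exact before_trans nd₁ h Bab₁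
      · exact Bab₁
    have hBv₁v₂ : Before P₁ v₁ v₂ :=
      firstIn_before hv₁ hv₂.1 (hSP₁ v₂ hv₂.1) (fun h => hne h.symm)
    obtain ⟨A, B, C, D, hPd⟩ := before3 nd₁ hBv₁v₂ hBv₂b
    have hbv₂ : b ≠ v₂ := by
      rintro rfl
      exact before_asymm nd₂ Bab₂
        (firstIn_before hv₂ haS haP₂ hab)
    obtain ⟨hv₂S, pre₂, post₂, hP₂split, hpre₂⟩ := hv₂
    have hv₁post : v₁ ∈ post₂ := by
      have : v₁ ∈ P₂ := hv₁.1.2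
      rw [hP₂split] at this
      rcases List.mem_append.mp this with h | h
      · exact absurd hv₁.1 (hpre₂ v₁ h)
      · rcases List.mem_cons.mp h with h' | h'
        · exact absurd h' hne
        · exact h'
    have hbpost : b ∈ post₂ := by
      have : b ∈ P₂ := hbP₂
      rw [hP₂split] at this
      rcases List.mem_append.mp this with h | h
      · exact absurd hbS (hpre₂ b h)
      · rcases List.mem_cons.mp h with h' | h'
        · exact absurd h' hbv₂
        · exact h'
    exact G.key hG h₁ h₂ hPd hP₂split hv₁post hbpost
  rw [hmain]
  exact ⟨hv₂.1, hv₂.2⟩
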